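/- Let D be a division ring of characteristic p > 0 with derivation δ and let f(t) = t^p − t − d ∈ D[t;δ]. Then the map G_{id,−1} (fixing D pointwise and sending t to t−1) is an automorphism of the Petit algebra S_f of order exactly p. -/

import Mathlib

open Finsupp

section Defs

variable {D R : Type*}

/-- `δ` is a derivation on the (possibly noncommutative) ring `D`. -/
def IsDeriv [Ring D] (δ : D → D) : Prop :=
  (∀ a b, δ (a + b) = δ a + δ b) ∧ ∀ a b, δ (a * b) = a * δ b + δ a * b

/-- `(R, i, t, coeff)` realizes the differential polynomial ring `D[t;δ]`:
`t * a = a * t + δ a` for `a ∈ D`, and every element of `R` is uniquely of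
the form `∑ aₙ tⁿ`, the `aₙ` being recorded by the additive equivalence `coeff`. -/
def IsDiffPolyRing [Ring D] [Ring R] (δ : D → D) (i : D →+* R) (t : R)
    (coeff : R ≃+ (ℕ →₀ D)) : Prop :=
  (∀ a : D, t * i a = i a * t + i (δ a)) ∧
    ∀ (n : ℕ) (a : D), coeff.symm (Finsupp.single n a) = i a * t ^ n

/-- `r` has degree `< m`. -/
def DegLt [Ring D] [Ring R] (coeff : R ≃+ (ℕ →₀ D)) (m : ℕ) (r : R) : Prop :=
  ∀ n, m ≤ n → coeff r n = 0

/-- `f` is monic of degree `m`. -/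
def MonicDeg [Ring D] [Ring R] (coeff : R ≃+ (ℕ →₀ D)) (m : ℕ) (f : R) : Prop :=
  coeff f m = 1 ∧ ∀ n, m < n → coeff f n = 0

/-- The carrier of the Petit algebra `S_f`: all polynomials of degree `< m`. -/
def SfSet [Ring D] [Ring R] (coeff : R ≃+ (ℕ →₀ D)) (m : ℕ) : Set R :=
  {r | DegLt coeff m r}

/-- `mul` is the Petit multiplication: `mul x y = x·y mod_r f`, i.e. `mul x y`
has degree `< m` and differs from `x·y` by a left multiple of `f`. -/
def IsPetitMul [Ring D] [Ring R] (coeff : R ≃+ (ℕ →₀ D)) (f : R) (m : ℕ)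
    (mul : R → R → R) : Prop :=
  ∀ x y : R, DegLt coeff m (mul x y) ∧ ∃ q : R, x * y = q * f + mul x y

/-- `f` is right semi-invariant: `f·a ∈ D·f` for all `a ∈ D`. -/
def RightSemiInvariant [Ring D] [Ring R] (i : D →+* R) (f : R) : Prop :=
  ∀ a : D, ∃ b : D, f * i a = i b * f

/-- `f` is two-sided (invariant): the left ideal `Rf` is a two-sided ideal. -/
def TwoSidedElem [Ring R] (f : R) : Prop :=
  ∀ r : R, ∃ q : R, f * r = q * f

/-- `f` (of degree `m`) is irreducible: it has no factorization into factors
of degree `< m`. -/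
def IrredDeg [Ring D] [Ring R] (coeff : R ≃+ (ℕ →₀ D)) (m : ℕ) (f : R) : Prop :=
  ¬∃ g h : R, f = g * h ∧ DegLt coeff m g ∧ DegLt coeff m h

/-- `f` (of degree `m`) is irreducible as a polynomial with coefficients in
the subfield `Fset` of `D`. -/
def IrredOver [Ring D] [Ring R] (coeff : R ≃+ (ℕ →₀ D)) (Fset : Set D) (m : ℕ)
    (f : R) : Prop :=
  ¬∃ g h : R, f = g * h ∧ DegLt coeff m g ∧ DegLt coeff m h ∧
    (∀ n, coeff g n ∈ Fset) ∧ ∀ n, coeff h n ∈ Fset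

/-- Left nucleus of the algebra `(S, mul)`. -/
def LeftNuc [Ring R] (S : Set R) (mul : R → R → R) : Set R :=
  {x ∈ S | ∀ y ∈ S, ∀ z ∈ S, mul (mul x y) z = mul x (mul y z)}

/-- Middle nucleus of the algebra `(S, mul)`. -/
def MidNuc [Ring R] (S : Set R) (mul : R → R → R) : Set R :=
  {x ∈ S | ∀ y ∈ S, ∀ z ∈ S, mul (mul y x) z = mul y (mul x z)}

/-- Right nucleus of the algebra `(S, mul)`. -/
def RightNuc [Ring R] (S : Set R) (mul : R → R → R) : Set R :=
  {x ∈ S | ∀ y ∈ S, ∀ z ∈ S, mul (mul y z) x = mul y (mul z x)}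

/-- `(S, mul)` is a division algebra: all nonzero left and right
multiplications are bijective. -/
def IsDivAlg [Ring R] (S : Set R) (mul : R → R → R) : Prop :=
  ∀ x ∈ S, x ≠ 0 → Set.BijOn (mul x) S S ∧ Set.BijOn (fun y => mul y x) S S

/-- `(S, mul)` is associative. -/
def IsAssocOn [Ring R] (S : Set R) (mul : R → R → R) : Prop :=
  ∀ x ∈ S, ∀ y ∈ S, ∀ z ∈ S, mul (mul x y) z = mul x (mul y z)

/-- The constants of `δ`. -/
def ConstSet [Ring D] (δ : D → D) : Set D := {a | δ a = 0}

/-- The center of `D`. -/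
def CenterSet (D : Type*) [Ring D] : Set D := {a | ∀ b, a * b = b * a}

/-- `F₀ = Const(δ) ∩ C(D)`. -/
def F0Set [Ring D] (δ : D → D) : Set D := ConstSet δ ∩ CenterSet D

/-- The elements of the Petit algebra all of whose coefficients lie in `Fset`,
e.g. `Fset ⊕ Fset·t ⊕ ⋯ ⊕ Fset·t^{m-1}`. -/
def SubCoeffSet [Ring D] [Ring R] (coeff : R ≃+ (ℕ →₀ D)) (m : ℕ)
    (Fset : Set D) : Set R :=
  {r | DegLt coeff m r ∧ ∀ n, coeff r n ∈ Fset}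

/-- `S ⊆ R` has dimension `k` over the subfield `Fset ⊆ D` (acting through `i`):
there is an `Fset`-basis of size `k`. -/
def HasDim [Ring D] [Ring R] (Fset : Set D) (i : D →+* R) (S : Set R) (k : ℕ) : Prop :=
  ∃ b : Fin k → R, (∀ j, b j ∈ S) ∧
    ∀ x ∈ S, ∃! c : Fin k → D, (∀ j, c j ∈ Fset) ∧ x = ∑ j, i (c j) * b j

/-- `S ⊆ D` has dimension `k` over the subfield `Fset ⊆ D`. -/
def HasDimIn [Ring D] (Fset : Set D) (S : Set D) (k : ℕ) : Prop :=
  ∃ b : Fin k → D, (∀ j, b j ∈ S) ∧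
    ∀ x ∈ S, ∃! c : Fin k → D, (∀ j, c j ∈ Fset) ∧ x = ∑ j, c j * b j

/-- Substitution of `x` for `t` in `r = ∑ aₙ tⁿ`. -/
noncomputable def substT [Ring D] [Ring R] (coeff : R ≃+ (ℕ →₀ D)) (i : D →+* R) (r x : R) : R :=
  (coeff r).sum fun n c => i c * x ^ n

/-- `V_f(b)`: the constant `f(t) − f(t−b)`. -/
noncomputable def Vf [Ring D] [Ring R] (coeff : R ≃+ (ℕ →₀ D)) (i : D →+* R) (t f : R) (b : D) : D :=
  coeff (f - substT coeff i f (t - i b)) 0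

/-- `V_p(b)`: the constant with `(t−b)^p = t^p − V_p(b)`. -/
noncomputable def Vp [Ring D] [Ring R] (coeff : R ≃+ (ℕ →₀ D)) (i : D →+* R) (t : R) (p : ℕ)
    (b : D) : D :=
  coeff (t ^ p - (t - i b) ^ p) 0

/-- For commutative coefficients, `V_p(b) = b^p + δ^{p−1}(b)`. -/
def VpFun [Ring D] (δ : D → D) (p : ℕ) : D → D := fun b => b ^ p + δ^[p - 1] b

/-- `V(a) = V_{p^e}(a) + c₁ V_{p^{e−1}}(a) + ⋯ + c_e a`, computed with
`V_p(b) = b^p + δ^{p−1}(b)` (commutative case). -/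
def Vg [Ring D] (δ : D → D) (p e : ℕ) (c : Fin e → D) : D → D :=
  fun a => (VpFun δ p)^[e] a + ∑ j : Fin e, c j * (VpFun δ p)^[e - 1 - (j : ℕ)] a

/-- `V(a) = V_{p^e}(a) + c₁ V_{p^{e−1}}(a) + ⋯ + c_e a`, with `V_p` defined by
the identity `(t−b)^p = t^p − V_p(b)` in `D[t;δ]`. -/
noncomputable def VgR [Ring D] [Ring R] (coeff : R ≃+ (ℕ →₀ D)) (i : D →+* R) (t : R) (p e : ℕ)
    (c : Fin e → D) : D → D :=
  fun a => (Vp coeff i t p)^[e] a + ∑ j : Fin e, c j * (Vp coeff i t p)^[e - 1 - (j : ℕ)] a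

/-- The map `G_{id,−a}` sending `∑ bₙ tⁿ` to `∑ bₙ (t−a)ⁿ`. -/
noncomputable def Gmap [Ring D] [Ring R] (coeff : R ≃+ (ℕ →₀ D)) (i : D →+* R) (t : R) (a : D) :
    R → R :=
  fun r => substT coeff i r (t - i a)

/-- `H` is an isomorphism of `Fset`-algebras from `(S, mul)` onto `(S', mul')`. -/
def IsAlgIso [Ring D] [Ring R] (Fset : Set D) (i : D →+* R) (S S' : Set R)
    (mul mul' : R → R → R) (H : R → R) : Prop :=
  Set.BijOn H S S' ∧ (∀ x ∈ S, ∀ y ∈ S, H (x + y) = H x + H y) ∧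
    (∀ x ∈ S, ∀ y ∈ S, H (mul x y) = mul' (H x) (H y)) ∧ H 1 = 1 ∧
    ∀ a ∈ Fset, ∀ x ∈ S, H (i a * x) = i a * H x

/-- `H` is an `Fset`-algebra automorphism of the Petit algebra `(S, mul)`. -/
def IsAut [Ring D] [Ring R] (Fset : Set D) (i : D →+* R) (S : Set R)
    (mul : R → R → R) (H : R → R) : Prop :=
  IsAlgIso Fset i S S mul mul H

/-- The operator `δ^{p^e} + c₁ δ^{p^{e−1}} + ⋯ + c_e δ` vanishes on `Cset`,
i.e. the `p`-polynomial `t^{p^e} + c₁ t^{p^{e−1}} + ⋯ + c_e t` annihilates `δ|_{Cset}`. -/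
def PPolyAnnOn [Ring D] (δ : D → D) (Cset : Set D) (p e : ℕ) (c : Fin e → D) : Prop :=
  ∀ a ∈ Cset, δ^[p ^ e] a + ∑ j : Fin e, c j * δ^[p ^ (e - 1 - (j : ℕ))] a = 0

/-- `t^{p^e} + c₁ t^{p^{e−1}} + ⋯ + c_e t` (coefficients in `Fset`) is the minimum
`p`-polynomial of `δ` restricted to `Cset`. -/
def IsMinPPoly [Ring D] (δ : D → D) (Cset Fset : Set D) (p e : ℕ)
    (c : Fin e → D) : Prop :=
  (∀ j, c j ∈ Fset) ∧ PPolyAnnOn δ Cset p e c ∧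
    ∀ e' : ℕ, e' < e → ∀ c' : Fin e' → D, (∀ j, c' j ∈ Fset) →
      ¬PPolyAnnOn δ Cset p e' c'

/-- The natural map from `D[X]` to `R`, `∑ aₙ Xⁿ ↦ ∑ aₙ tⁿ`. -/
noncomputable def polyToR [Ring D] [Ring R] (i : D →+* R) (t : R) (q : Polynomial D) : R :=
  q.sum fun n a => i a * t ^ n

/-- The element `f ∈ R` rewritten as an ordinary polynomial in `D[X]`. -/
noncomputable def coeffPoly [Ring D] [Ring R] (coeff : R ≃+ (ℕ →₀ D)) (f : R) : Polynomial D :=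
  (coeff f).sum fun n a => Polynomial.C a * Polynomial.X ^ n

/-- The set `T = Fset ⊕ Fset·t ⊕ ⋯ ⊕ Fset·t^{m−1} ⊆ S_f` is isomorphic, as a
ring, to the quotient `Fset[X]/(f)`: the natural map `θ : ∑ aₙ Xⁿ ↦ ∑ aₙ tⁿ`,
from polynomials over `Fset` of degree `< m` with multiplication given by
reduction mod `f`, is a bijection onto `T` respecting all the operations. -/
def IsPolyQuotIso [Ring D] [Ring R] (Fset : Set D) (i : D →+* R)
    (coeff : R ≃+ (ℕ →₀ D)) (t f : R) (m : ℕ) (mul : R → R → R) (T : Set R) : Prop :=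
  Set.BijOn (polyToR i t)
    {q : Polynomial D | (∀ n, q.coeff n ∈ Fset) ∧ q.degree < (m : WithBot ℕ)} T ∧
  (∀ q q' : Polynomial D, polyToR i t (q + q') = polyToR i t q + polyToR i t q') ∧
  polyToR i t 1 = 1 ∧
  ∀ q ∈ {q : Polynomial D | (∀ n, q.coeff n ∈ Fset) ∧ q.degree < (m : WithBot ℕ)},
    ∀ q' ∈ {q : Polynomial D | (∀ n, q.coeff n ∈ Fset) ∧ q.degree < (m : WithBot ℕ)},
      ∃ s r : Polynomial D, q * q' = s * coeffPoly coeff f + r ∧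
        r.degree < (m : WithBot ℕ) ∧
        polyToR i t r = mul (polyToR i t q) (polyToR i t q')

end Defs

section AuxProof
variable {D R : Type*} [DivisionRing D] [Ring R]
variable {δ : D → D} {i : D →+* R} {t : R} {coeff : R ≃+ (ℕ →₀ D)}

lemma coeff_monomial (hR : IsDiffPolyRing δ i t coeff) (n : ℕ) (a : D) :
    coeff (i a * t ^ n) = Finsupp.single n a := by
  rw [← hR.2 n a, coeff.apply_symm_apply]

lemma R_induction (hR : IsDiffPolyRing δ i t coeff) {P : R → Prop}
    (h0 : P 0) (hmono : ∀ n a, P (i a * t ^ n))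
    (hadd : ∀ x y, P x → P y → P (x + y)) : ∀ r, P r := by
  intro r
  rw [← coeff.symm_apply_apply r]
  generalize coeff r = g
  induction g using Finsupp.induction with
  | zero => simpa using h0
  | single_add n a g _ _ ih =>
      rw [map_add, hR.2]
      exact hadd _ _ (hmono n a) ih

lemma substT_add (x y u : R) :
    substT coeff i (x + y) u = substT coeff i x u + substT coeff i y u := by
  unfold substT
  rw [map_add]
  exact Finsupp.sum_add_index' (by simp) (by simp [add_mul])

lemma substT_zero (u : R) : substT coeff i (0 : R) u = 0 := by
  unfold substT; simp

lemma substT_monomial (hR : IsDiffPolyRing δ i t coeff) (n : ℕ) (a : D) (u : R) :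
    substT coeff i (i a * t ^ n) u = i a * u ^ n := by
  unfold substT
  rw [coeff_monomial hR, Finsupp.sum_single_index (by simp)]

lemma t_mul_monomial (hR : IsDiffPolyRing δ i t coeff) (n : ℕ) (a : D) :
    t * (i a * t ^ n) = i a * t ^ (n + 1) + i (δ a) * t ^ n := by
  rw [← mul_assoc, hR.1, add_mul, mul_assoc, ← pow_succ']

lemma substT_t_mul (hR : IsDiffPolyRing δ i t coeff) {u : R}
    (hu : ∀ a : D, u * i a = i a * u + i (δ a)) :
    ∀ r, substT coeff i (t * r) u = u * substT coeff i r u := by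
  refine R_induction hR ?_ ?_ ?_
  · simp [substT_zero]
  · intro n a
    rw [t_mul_monomial hR, substT_add, substT_monomial hR, substT_monomial hR,
      substT_monomial hR, ← mul_assoc, hu, add_mul, mul_assoc, ← pow_succ']
  · intro x y hx hy
    rw [mul_add, substT_add, hx, hy, substT_add, mul_add]

lemma substT_smul (hR : IsDiffPolyRing δ i t coeff) (a : D) (u : R) :
    ∀ r, substT coeff i (i a * r) u = i a * substT coeff i r u := by
  refine R_induction hR ?_ ?_ ?_
  · simp [substT_zero]
  · intro n b
    rw [← mul_assoc, ← map_mul, substT_monomial hR, substT_monomial hR, map_mul, mul_assoc]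
  · intro x y hx hy
    rw [mul_add, substT_add, hx, hy, substT_add, mul_add]

lemma substT_tpow_mul (hR : IsDiffPolyRing δ i t coeff) {u : R}
    (hu : ∀ a : D, u * i a = i a * u + i (δ a)) (k : ℕ) :
    ∀ r, substT coeff i (t ^ k * r) u = u ^ k * substT coeff i r u := by
  induction k with
  | zero => intro r; simp
  | succ k ih =>
      intro r
      rw [pow_succ', mul_assoc, substT_t_mul hR hu, ih, pow_succ', mul_assoc]

lemma substT_mul (hR : IsDiffPolyRing δ i t coeff) {u : R}
    (hu : ∀ a : D, u * i a = i a * u + i (δ a)) :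
    ∀ x y : R, substT coeff i (x * y) u = substT coeff i x u * substT coeff i y u := by
  intro x y
  induction x using R_induction hR with
  | h0 => simp [substT_zero]
  | hmono n a =>
      rw [mul_assoc, substT_smul hR, substT_tpow_mul hR hu, substT_monomial hR,
        ← mul_assoc]
  | hadd x x' hx hx' => rw [add_mul, substT_add, hx, hx', substT_add, add_mul]

lemma substT_one (hR : IsDiffPolyRing δ i t coeff) (u : R) :
    substT coeff i (1 : R) u = 1 := by
  have h : (1 : R) = i 1 * t ^ 0 := by simp
  rw [h, substT_monomial hR]; simp

lemma substT_self (hR : IsDiffPolyRing δ i t coeff) :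
    ∀ r, substT coeff i r t = r := by
  refine R_induction hR ?_ ?_ ?_
  · simp [substT_zero]
  · intro n a; rw [substT_monomial hR]
  · intro x y hx hy; rw [substT_add, hx, hy]

lemma substT_t (hR : IsDiffPolyRing δ i t coeff) (u : R) :
    substT coeff i t u = u := by
  have h : (t : R) = i 1 * t ^ 1 := by simp
  rw [h, substT_monomial hR]; simp

lemma substT_const (hR : IsDiffPolyRing δ i t coeff) (a : D) (u : R) :
    substT coeff i (i a) u = i a := by
  have h : (i a : R) = i a * t ^ 0 := by simp
  rw [h, substT_monomial hR]; simp

/-- The substitution map as a ring homomorphism. -/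
noncomputable def substHom (hR : IsDiffPolyRing δ i t coeff) (u : R)
    (hu : ∀ a : D, u * i a = i a * u + i (δ a)) : R →+* R where
  toFun r := substT coeff i r u
  map_one' := substT_one hR u
  map_mul' := substT_mul hR hu
  map_zero' := substT_zero u
  map_add' := fun x y => substT_add x y u

@[simp] lemma substHom_apply (hR : IsDiffPolyRing δ i t coeff) (u : R)
    (hu : ∀ a : D, u * i a = i a * u + i (δ a)) (r : R) :
    substHom hR u hu r = substT coeff i r u := rfl


-- ## coefficient computations
lemma coeff_i_mul (hR : IsDiffPolyRing δ i t coeff) (a : D) :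
    ∀ r n, coeff (i a * r) n = a * coeff r n := by
  have h : ∀ r, ∀ n, coeff (i a * r) n = a * coeff r n := by
    refine R_induction hR ?_ ?_ ?_
    · simp
    · intro k b n
      rw [← mul_assoc, ← map_mul, coeff_monomial hR, coeff_monomial hR]
      rcases eq_or_ne k n with rfl | hne
      · simp [Finsupp.single_apply]
      · simp [Finsupp.single_apply, hne]
    · intro x y hx hy n
      rw [mul_add, map_add coeff, Finsupp.add_apply, hx, hy, map_add coeff, Finsupp.add_apply, mul_add]
  exact h

-- ## DegLt closure
lemma degLt_mono {m m' : ℕ} (h : m ≤ m') {x : R} (hx : DegLt coeff m x) :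
    DegLt coeff m' x := fun n hn => hx n (le_trans h hn)

lemma degLt_add {m : ℕ} {x y : R} (hx : DegLt coeff m x) (hy : DegLt coeff m y) :
    DegLt coeff m (x + y) := by
  intro n hn; rw [map_add, Finsupp.add_apply, hx n hn, hy n hn, add_zero]

lemma degLt_neg {m : ℕ} {x : R} (hx : DegLt coeff m x) : DegLt coeff m (-x) := by
  intro n hn; rw [map_neg, Finsupp.neg_apply, hx n hn, neg_zero]

lemma degLt_sub {m : ℕ} {x y : R} (hx : DegLt coeff m x) (hy : DegLt coeff m y) :
    DegLt coeff m (x - y) := by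
  rw [sub_eq_add_neg]; exact degLt_add hx (degLt_neg hy)

lemma degLt_zero (m : ℕ) : DegLt coeff m (0 : R) := by
  intro n hn; simp

lemma eq_zero_of_degLt_zero {x : R} (hx : DegLt coeff 0 x) : x = 0 := by
  have h : coeff x = 0 := by ext n; exact hx n (Nat.zero_le n)
  have := coeff.injective (h.trans (map_zero coeff).symm)
  exact this

lemma degLt_i_mul (hR : IsDiffPolyRing δ i t coeff) {m : ℕ} (a : D) {r : R}
    (h : DegLt coeff m r) : DegLt coeff m (i a * r) := by
  intro n hn; rw [coeff_i_mul hR, h n hn, mul_zero]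

lemma degLt_monomial (hR : IsDiffPolyRing δ i t coeff) (k : ℕ) (a : D) :
    DegLt coeff (k + 1) (i a * t ^ k) := by
  intro n hn
  rw [coeff_monomial hR, Finsupp.single_apply, if_neg (by omega)]

lemma coeff_mul_t (hR : IsDiffPolyRing δ i t coeff) :
    ∀ x : R, ∀ n, coeff (x * t) (n + 1) = coeff x n := by
  refine R_induction hR ?_ ?_ ?_
  · simp
  · intro k a n
    have h : i a * t ^ k * t = i a * t ^ (k + 1) := by rw [mul_assoc, ← pow_succ]
    rw [h, coeff_monomial hR, coeff_monomial hR, Finsupp.single_apply,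
      Finsupp.single_apply]
    by_cases hkn : k = n
    · simp [hkn]
    · rw [if_neg (by omega), if_neg hkn]
  · intro x y hx hy n
    rw [add_mul, map_add coeff, Finsupp.add_apply, hx, hy, map_add coeff, Finsupp.add_apply]

lemma degLt_mul_t (hR : IsDiffPolyRing δ i t coeff) {m : ℕ} {x : R}
    (h : DegLt coeff m x) : DegLt coeff (m + 1) (x * t) := by
  intro n hn
  obtain ⟨j, rfl⟩ : ∃ j, n = j + 1 := ⟨n - 1, by omega⟩
  rw [coeff_mul_t hR, h j (by omega)]

lemma isDeriv_zero (hδ : IsDeriv δ) : δ 0 = 0 := by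
  have := hδ.1 0 0
  simpa using this

lemma coeff_t_mul (hR : IsDiffPolyRing δ i t coeff) (hδ : IsDeriv δ) :
    ∀ r : R, ∀ n, coeff (t * r) (n + 1) = coeff r n + δ (coeff r (n + 1)) := by
  refine R_induction hR ?_ ?_ ?_
  · simp [isDeriv_zero hδ]
  · intro k a n
    rw [t_mul_monomial hR, map_add coeff, Finsupp.add_apply, coeff_monomial hR,
      coeff_monomial hR, coeff_monomial hR]
    simp only [Finsupp.single_apply]
    by_cases h1 : k = n
    · subst h1
      rw [if_pos rfl, if_neg (by omega), if_pos rfl, if_neg (by omega), isDeriv_zero hδ]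
    · rw [if_neg (by omega), if_neg h1, zero_add, zero_add]
      by_cases h2 : k = n + 1
      · rw [if_pos h2, if_pos h2]
      · rw [if_neg h2, if_neg h2, isDeriv_zero hδ]
  · intro x y hx hy n
    rw [mul_add, map_add coeff, Finsupp.add_apply, hx, hy, map_add coeff, Finsupp.add_apply,
      Finsupp.add_apply, hδ.1]
    abel

lemma degLt_t_mul (hR : IsDiffPolyRing δ i t coeff) (hδ : IsDeriv δ) {m : ℕ} {r : R}
    (h : DegLt coeff m r) : DegLt coeff (m + 1) (t * r) := by
  intro n hn
  obtain ⟨j, rfl⟩ : ∃ j, n = j + 1 := ⟨n - 1, by omega⟩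
  rw [coeff_t_mul hR hδ, h j (by omega), h (j + 1) (by omega), isDeriv_zero hδ, add_zero]

lemma tpow_mul_i (hR : IsDiffPolyRing δ i t coeff) (hδ : IsDeriv δ) (a : D) :
    ∀ k : ℕ, ∃ r : R, t ^ k * i a = i a * t ^ k + r ∧ DegLt coeff k r := by
  intro k
  induction k with
  | zero => exact ⟨0, by simp, degLt_zero 0⟩
  | succ k ih =>
      obtain ⟨r, hr, hdeg⟩ := ih
      refine ⟨i (δ a) * t ^ k + t * r, ?_, ?_⟩
      · rw [pow_succ', mul_assoc, hr, mul_add, t_mul_monomial hR, add_assoc, ← pow_succ']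
      · exact degLt_add (degLt_monomial hR k (δ a)) (degLt_t_mul hR hδ hdeg)

lemma degLt_sum {m : ℕ} {s : Finset ℕ} {g : ℕ → R}
    (h : ∀ j ∈ s, DegLt coeff m (g j)) : DegLt coeff m (∑ j ∈ s, g j) := by
  intro n hn
  rw [map_sum, Finsupp.finset_sum_apply]
  exact Finset.sum_eq_zero fun j hj => h j hj n hn

lemma repr_eq (hR : IsDiffPolyRing δ i t coeff) (x : R) :
    x = ∑ n ∈ (coeff x).support, i (coeff x n) * t ^ n := by
  conv_lhs => rw [← substT_self hR x]
  rfl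

lemma support_lt {m : ℕ} {x : R} (hx : DegLt coeff m x) {n : ℕ}
    (hn : n ∈ (coeff x).support) : n < m := by
  by_contra h
  exact (Finsupp.mem_support_iff.mp hn) (hx n (by omega))

lemma degLt_mul_i (hR : IsDiffPolyRing δ i t coeff) (hδ : IsDeriv δ) {m : ℕ} {x : R}
    (hx : DegLt coeff m x) (b : D) : DegLt coeff m (x * i b) := by
  rw [repr_eq hR x, Finset.sum_mul]
  refine degLt_sum fun j hj => ?_
  obtain ⟨r, hr, hrdeg⟩ := tpow_mul_i hR hδ b j
  rw [mul_assoc, hr]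
  refine degLt_i_mul hR _ (degLt_add ?_ (degLt_mono (Nat.le_of_lt (support_lt hx hj)) hrdeg))
  exact degLt_mono (support_lt hx hj) (degLt_monomial hR j b)

lemma degLt_upow (hR : IsDiffPolyRing δ i t coeff) (hδ : IsDeriv δ) (b : D) :
    ∀ n : ℕ, DegLt coeff (n + 1) ((t - i b) ^ n) := by
  intro n
  induction n with
  | zero =>
      have h := degLt_monomial hR 0 (1 : D)
      simpa using h
  | succ n ih =>
      rw [pow_succ, mul_sub]
      exact degLt_sub (degLt_mul_t hR ih) (degLt_mono (by omega) (degLt_mul_i hR hδ ih b))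

lemma degLt_substT (hR : IsDiffPolyRing δ i t coeff) (hδ : IsDeriv δ) (b : D)
    {m : ℕ} {x : R} (hx : DegLt coeff m x) :
    DegLt coeff m (substT coeff i x (t - i b)) := by
  have h : substT coeff i x (t - i b)
      = ∑ n ∈ (coeff x).support, i (coeff x n) * (t - i b) ^ n := rfl
  rw [h]
  refine degLt_sum fun j hj => ?_
  exact degLt_i_mul hR _ (degLt_mono (support_lt hx hj) (degLt_upow hR hδ b j))


-- ## leading coefficient of `z * f`
lemma mono_mul_f (hR : IsDiffPolyRing δ i t coeff) (hδ : IsDeriv δ) {p : ℕ}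
    (hp2 : 2 ≤ p) {d : D} {f : R} (hfdef : f = t ^ p - t - i d) (k : ℕ) (a : D) :
    coeff (i a * t ^ k * f) (k + p) = a ∧ DegLt coeff (k + p + 1) (i a * t ^ k * f) := by
  obtain ⟨r, hr, hrdeg⟩ := tpow_mul_i hR hδ d k
  have hkf : t ^ k * f = i 1 * t ^ (k + p) - i 1 * t ^ (k + 1) - (i d * t ^ k + r) := by
    rw [hfdef, mul_sub, mul_sub, ← pow_add, ← pow_succ, hr]; simp
  have h2 : i a * t ^ k * f = i a * (t ^ k * f) := by rw [mul_assoc]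
  constructor
  · rw [h2, coeff_i_mul hR, hkf, map_sub coeff, Finsupp.sub_apply, map_sub coeff,
      Finsupp.sub_apply, map_add coeff, Finsupp.add_apply, coeff_monomial hR,
      coeff_monomial hR, coeff_monomial hR, Finsupp.single_apply, Finsupp.single_apply,
      Finsupp.single_apply, if_pos rfl, if_neg (by omega), if_neg (by omega),
      hrdeg (k + p) (by omega)]
    simp
  · rw [h2, hkf]
    refine degLt_i_mul hR a (degLt_sub (degLt_sub ?_ ?_) (degLt_add ?_ ?_))
    · exact degLt_monomial hR (k + p) 1
    · exact degLt_mono (by omega) (degLt_monomial hR (k + 1) 1)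
    · exact degLt_mono (by omega) (degLt_monomial hR k d)
    · exact degLt_mono (by omega) hrdeg

lemma decomp (hR : IsDiffPolyRing δ i t coeff) (k : ℕ) (z : R)
    (hz : DegLt coeff (k + 1) z) :
    z = i (coeff z k) * t ^ k + (z - i (coeff z k) * t ^ k) ∧
      DegLt coeff k (z - i (coeff z k) * t ^ k) := by
  refine ⟨by abel, ?_⟩
  intro n hn
  rw [map_sub coeff, Finsupp.sub_apply, coeff_monomial hR, Finsupp.single_apply]
  rcases eq_or_ne k n with rfl | hne
  · rw [if_pos rfl, sub_self]
  · rw [if_neg hne, hz n (by omega), sub_zero]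

lemma lead (hR : IsDiffPolyRing δ i t coeff) (hδ : IsDeriv δ) {p : ℕ}
    (hp2 : 2 ≤ p) {d : D} {f : R} (hfdef : f = t ^ p - t - i d) :
    ∀ k : ℕ, ∀ z : R, DegLt coeff (k + 1) z →
      coeff (z * f) (k + p) = coeff z k ∧ DegLt coeff (k + p + 1) (z * f) := by
  intro k
  induction k with
  | zero =>
      intro z hz
      obtain ⟨hzeq, hz'⟩ := decomp hR 0 z hz
      have hz0 : z - i (coeff z 0) * t ^ 0 = 0 := eq_zero_of_degLt_zero hz'
      have hzz : z = i (coeff z 0) * t ^ 0 := by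
        conv_lhs => rw [hzeq]
        rw [hz0, add_zero]
      have h := mono_mul_f hR hδ hp2 hfdef 0 (coeff z 0)
      rw [← hzz] at h
      exact h
  | succ k ih =>
      intro z hz
      obtain ⟨hzeq, hz'⟩ := decomp hR (k + 1) z hz
      set a := coeff z (k + 1) with ha
      set z' := z - i a * t ^ (k + 1) with hz'def
      obtain ⟨hc', hd'⟩ := ih z' hz'
      have hm := mono_mul_f hR hδ hp2 hfdef (k + 1) a
      have hsplit : z * f = i a * t ^ (k + 1) * f + z' * f := by
        rw [← add_mul, ← hzeq]
      constructor
      · rw [hsplit, map_add coeff, Finsupp.add_apply, hm.1, hd' (k + 1 + p) (by omega),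
          add_zero]
      · rw [hsplit]
        exact degLt_add hm.2 (degLt_mono (by omega) hd')

lemma mul_f_zero (hR : IsDiffPolyRing δ i t coeff) (hδ : IsDeriv δ) {p : ℕ}
    (hp2 : 2 ≤ p) {d : D} {f : R} (hfdef : f = t ^ p - t - i d) {z : R}
    (h : DegLt coeff p (z * f)) : z = 0 := by
  by_contra hz
  have hne : coeff z ≠ 0 := fun hc => hz (coeff.injective (by rw [hc, map_zero]))
  have hsupp : (coeff z).support.Nonempty := Finsupp.support_nonempty_iff.mpr hne
  set k := (coeff z).support.max' hsupp with hk
  have hknz : coeff z k ≠ 0 := Finsupp.mem_support_iff.mp ((coeff z).support.max'_mem hsupp)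
  have hdz : DegLt coeff (k + 1) z := by
    intro n hn
    by_contra h'
    have := Finset.le_max' (coeff z).support n (Finsupp.mem_support_iff.mpr h')
    omega
  have hlead := (lead hR hδ hp2 hfdef k z hdz).1
  exact hknz (by rw [← hlead]; exact h (k + p) (by omega))

end AuxProof

/-- for `f(t) = t^p − t − d ∈ D[t;δ]` in characteristic `p`, the
map `G_{id,−1}` is an automorphism of `S_f` of order exactly `p`. -/
theorem stmt_7 {D R : Type*} [DivisionRing D] [Ring R]
    (p : ℕ) (hp : p.Prime) [CharP D p]
    (δ : D → D) (hδ : IsDeriv δ)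
    (i : D →+* R) (t : R) (coeff : R ≃+ (ℕ →₀ D))
    (hR : IsDiffPolyRing δ i t coeff)
    (d : D) (f : R) (hfdef : f = t ^ p - t - i d)
    (mulS : R → R → R) (hmulS : IsPetitMul coeff f p mulS) :
    -- G_{id,−1} fixes D pointwise and sends t to t − 1 ...
    (∀ a : D, Gmap coeff i t 1 (i a) = i a) ∧
    Gmap coeff i t 1 t = t - 1 ∧
    -- ... is an automorphism of S_f ...
    IsAut (F0Set δ) i (SfSet coeff p) mulS (Gmap coeff i t 1) ∧
    -- ... of order exactly p
    (∀ x ∈ SfSet coeff p, (Gmap coeff i t 1)^[p] x = x) ∧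
    ∀ k : ℕ, 0 < k → k < p → ∃ x ∈ SfSet coeff p, (Gmap coeff i t 1)^[k] x ≠ x := by
  have hp2 : 2 ≤ p := hp.two_le
  haveI : Fact p.Prime := ⟨hp⟩
  have hi : Function.Injective i := by
    intro a b hab
    have ha := hR.2 0 a
    have hb := hR.2 0 b
    simp only [pow_zero, mul_one] at ha hb
    have hsab : Finsupp.single 0 a = Finsupp.single 0 b :=
      coeff.symm.injective (by rw [ha, hb, hab])
    exact Finsupp.single_injective 0 hsab
  haveI : CharP R p := charP_of_injective_ringHom hi p
  have hu1 : ∀ a : D, (t - 1) * i a = i a * (t - 1) + i (δ a) := by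
    intro a
    rw [sub_mul, hR.1, one_mul, mul_sub, mul_one]
    abel
  have hu2 : ∀ a : D, (t + 1) * i a = i a * (t + 1) + i (δ a) := by
    intro a
    rw [add_mul, hR.1, one_mul, mul_add, mul_one]
    abel
  set Φ := substHom hR (t - 1) hu1 with hΦdef
  set Ψ := substHom hR (t + 1) hu2 with hΨdef
  have hG : Gmap coeff i t 1 = ⇑Φ := by
    funext r
    show substT coeff i r (t - i 1) = _
    rw [map_one]
    rfl
  have hΦt : Φ t = t - 1 := substT_t hR _
  have hΨt : Ψ t = t + 1 := substT_t hR _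
  have hΦc : ∀ a : D, Φ (i a) = i a := fun a => substT_const hR a _
  have hΨc : ∀ a : D, Ψ (i a) = i a := fun a => substT_const hR a _
  have hΨΦ : ∀ r : R, Ψ (Φ r) = r := by
    refine R_induction hR ?_ ?_ ?_
    · simp
    · intro n a
      rw [map_mul, map_pow, hΦc, hΦt, map_mul, map_pow, hΨc, map_sub, map_one, hΨt]
      norm_num
    · intro x y hx hy
      rw [map_add, map_add, hx, hy]
  have hΦΨ : ∀ r : R, Φ (Ψ r) = r := by
    refine R_induction hR ?_ ?_ ?_
    · simp
    · intro n a
      rw [map_mul, map_pow, hΨc, hΨt, map_mul, map_pow, hΦc, map_add, map_one, hΦt]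
      norm_num
    · intro x y hx hy
      rw [map_add, map_add, hx, hy]
  have hdegΦ : ∀ {x : R}, DegLt coeff p x → DegLt coeff p (Φ x) := by
    intro x hx
    have h := degLt_substT hR hδ 1 hx
    rwa [map_one] at h
  have hdegΨ : ∀ {x : R}, DegLt coeff p x → DegLt coeff p (Ψ x) := by
    intro x hx
    have h := degLt_substT hR hδ (-1) hx
    rwa [map_neg, map_one, sub_neg_eq_add] at h
  have hφf : Φ f = f := by
    rw [hfdef, map_sub, map_sub, map_pow, hΦt, hΦc,
      sub_pow_char_of_commute p (Commute.one_right t), one_pow]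
    abel
  have hmul : ∀ x y : R, Φ (mulS x y) = mulS (Φ x) (Φ y) := by
    intro x y
    obtain ⟨hd1, q, hq⟩ := hmulS x y
    obtain ⟨hd2, q', hq'⟩ := hmulS (Φ x) (Φ y)
    have e1 : Φ x * Φ y = Φ q * f + Φ (mulS x y) := by
      rw [← map_mul, hq, map_add, map_mul, hφf]
    have h3 : q' * f + mulS (Φ x) (Φ y) = Φ q * f + Φ (mulS x y) := hq'.symm.trans e1
    have e2 : (q' - Φ q) * f = Φ (mulS x y) - mulS (Φ x) (Φ y) := by
      rw [sub_mul]
      exact sub_eq_sub_iff_add_eq_add.mpr (h3.trans (add_comm _ _))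
    have hz : q' - Φ q = 0 :=
      mul_f_zero hR hδ hp2 hfdef (by rw [e2]; exact degLt_sub (hdegΦ hd1) hd2)
    have hfin : Φ (mulS x y) - mulS (Φ x) (Φ y) = 0 := by
      rw [← e2, hz, zero_mul]
    exact sub_eq_zero.mp hfin
  have hiter : ∀ (k : ℕ) (x : R), (⇑Φ)^[k] x = substT coeff i x (t - (k : R)) := by
    intro k
    induction k with
    | zero => intro x; simp [substT_self hR]
    | succ k ih =>
        intro x
        rw [Function.iterate_succ_apply', ih]
        induction x using R_induction hR with
        | h0 => simp [substT_zero]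
        | hmono n a =>
            rw [substT_monomial hR, map_mul, map_pow, hΦc, map_sub, hΦt, map_natCast,
              substT_monomial hR]
            have harg : t - 1 - (k : R) = t - ((k + 1 : ℕ) : R) := by
              push_cast
              abel
            rw [harg]
        | hadd x y hx hy => rw [substT_add, map_add, hx, hy, substT_add]
  have htS : t ∈ SfSet coeff p := by
    intro n hn
    have ht1 : (t : R) = i 1 * t ^ 1 := by simp
    rw [ht1, coeff_monomial hR, Finsupp.single_apply, if_neg (by omega)]
  refine ⟨?_, ?_, ?_, ?_, ?_⟩
  · intro a
    rw [hG]
    exact hΦc a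
  · rw [hG]
    exact hΦt
  · rw [hG]
    refine ⟨⟨fun x hx => hdegΦ hx, fun x _ y _ h => ?_, fun y hy => ⟨Ψ y, hdegΨ hy, hΦΨ y⟩⟩,
      fun x _ y _ => map_add Φ x y, fun x _ y _ => hmul x y, map_one Φ,
      fun a _ x _ => substT_smul hR a _ x⟩
    have h2 := congrArg Ψ h
    rwa [hΨΦ, hΨΦ] at h2
  · intro x _
    rw [hG, hiter p x, CharP.cast_eq_zero R p, sub_zero, substT_self hR]
  · intro k hk0 hkp
    refine ⟨t, htS, ?_⟩
    rw [hG, hiter k t, substT_t hR]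
    intro heq
    have hc0 : (k : R) = 0 := sub_eq_self.mp heq
    rw [← map_natCast i k] at hc0
    have hcD : ((k : ℕ) : D) = 0 := hi (by rw [hc0, map_zero])
    have hdvd : p ∣ k := (CharP.cast_eq_zero_iff D p k).mp hcD
    have := Nat.le_of_dvd hk0 hdvd
    omega
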